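/- Let ψ : ℝ → ℝ be a bounded, twice continuously differentiable function with ψ > 0, and suppose there exists λ > 0 such that ψ''(x) − ψ'(x) ≥ λ·ψ(x) for all x ∈ ℝ. Then no such ψ exists; equivalently, if ψ'' − ψ' ≥ λψ holds everywhere for a bounded positive C² function ψ, then λ ≤ 0. -/

import Mathlib

theorem stmt_3 (ψ : ℝ → ℝ) (hC2 : ContDiff ℝ 2 ψ) (hbd : ∃ M, ∀ x, ψ x ≤ M)
    (hpos : ∀ x, 0 < ψ x) (lam : ℝ)
    (h : ∀ x, lam * ψ x ≤ deriv (deriv ψ) x - deriv ψ x) : lam ≤ 0 := by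
  by_contra hl
  push_neg at hl
  obtain ⟨M, hM⟩ := hbd
  have hM0 : 0 < M := lt_of_lt_of_le (hpos 0) (hM 0)
  set s := Real.sqrt (1 + 4 * lam) with hs
  have hs2 : s ^ 2 = 1 + 4 * lam := Real.sq_sqrt (by linarith)
  have hs1 : 1 < s := by nlinarith [Real.sqrt_nonneg (1 + 4 * lam)]
  set rp := (1 + s) / 2 with hrp
  set rm := (1 - s) / 2 with hrm
  have hrp1 : 1 < rp := by rw [hrp]; linarith
  have hrm0 : rm < 0 := by rw [hrm]; linarith
  have hsum : rp + rm = 1 := by rw [hrp, hrm]; ring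
  have hprod : rp * rm = -lam := by rw [hrp, hrm]; nlinarith
  have hd1 : Differentiable ℝ ψ := hC2.differentiable (by norm_num)
  have hC1 : ContDiff ℝ 1 (deriv ψ) := by
    have := (contDiff_succ_iff_deriv (n := 1)).mp hC2
    exact this.2.2
  have hd2 : Differentiable ℝ (deriv ψ) := hC1.differentiable (by norm_num)
  set u := fun x => deriv ψ x - rm * ψ x with hu
  have hdu : ∀ x, HasDerivAt u (deriv (deriv ψ) x - rm * deriv ψ x) x := by
    intro x
    exact ((hd2 x).hasDerivAt).sub (((hd1 x).hasDerivAt).const_mul rm)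
  have hkey : ∀ x, 0 ≤ (deriv (deriv ψ) x - rm * deriv ψ x) - rp * u x := by
    intro x
    have hx := h x
    simp only [hu]
    have e1 : deriv (deriv ψ) x - rm * deriv ψ x - rp * (deriv ψ x - rm * ψ x)
        = deriv (deriv ψ) x - deriv ψ x - lam * ψ x := by
      linear_combination (-(deriv ψ x)) * hsum + (ψ x) * hprod
    rw [e1]
    linarith
  by_cases hex : ∃ a, 0 < u a
  · -- Case 1 : u is positive somewhere, then ψ grows linearly eventually
    obtain ⟨a, ha⟩ := hex
    set v := fun x => Real.exp (-rp * x) * u x with hv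
    have hdv : ∀ x, HasDerivAt v
        (Real.exp (-rp * x) * ((deriv (deriv ψ) x - rm * deriv ψ x) - rp * u x)) x := by
      intro x
      have h1 : HasDerivAt (fun x => Real.exp (-rp * x)) (Real.exp (-rp * x) * (-rp)) x := by
        simpa using ((hasDerivAt_id x).const_mul (-rp)).exp
      have : HasDerivAt (fun y => Real.exp (-rp * y) * u y) _ x := h1.mul (hdu x)
      convert this using 1
      ring
    have hmono : Monotone v := by
      apply monotone_of_deriv_nonneg
      · exact fun x => (hdv x).differentiableAt
      · intro x
        rw [(hdv x).deriv]
        exact mul_nonneg (Real.exp_pos _).le (hkey x)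
    -- lower bound for u on [a, ∞)
    have hub : ∀ x, a ≤ x → u a * (x - a) ≤ u x := by
      intro x hx
      have h1 : v a ≤ v x := hmono hx
      have h2 : Real.exp (-rp * a) * u a ≤ Real.exp (-rp * x) * u x := h1
      have h3 : Real.exp (rp * x) * (Real.exp (-rp * a) * u a)
          ≤ Real.exp (rp * x) * (Real.exp (-rp * x) * u x) :=
        mul_le_mul_of_nonneg_left h2 (Real.exp_pos _).le
      have h4 : Real.exp (rp * (x - a)) * u a ≤ u x := by
        rw [show rp * (x - a) = rp * x + -rp * a by ring, Real.exp_add]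
        calc Real.exp (rp * x) * Real.exp (-rp * a) * u a
            = Real.exp (rp * x) * (Real.exp (-rp * a) * u a) := by ring
          _ ≤ Real.exp (rp * x) * (Real.exp (-rp * x) * u x) := h3
          _ = Real.exp (rp * x + -rp * x) * u x := by rw [Real.exp_add]; ring
          _ = u x := by simp
      have h5 : x - a ≤ Real.exp (rp * (x - a)) := by
        have := Real.add_one_le_exp (rp * (x - a))
        nlinarith [sub_nonneg.mpr hx]
      nlinarith [mul_le_mul_of_nonneg_left h5 ha.le]
    set b := a + (1 - rm * M) / u a with hb
    have hba : a ≤ b := by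
      rw [hb]
      have : 0 < (1 - rm * M) / u a := div_pos (by nlinarith) ha
      linarith
    have hder1 : ∀ x, b ≤ x → 1 ≤ deriv ψ x := by
      intro x hx
      have h1 : u a * (x - a) ≤ u x := hub x (le_trans hba hx)
      have h2 : (1 - rm * M) ≤ u a * (x - a) := by
        have hxa : (1 - rm * M) / u a ≤ x - a := by
          rw [hb] at hx; linarith
        calc (1 - rm * M) = u a * ((1 - rm * M) / u a) := by
              rw [mul_div_cancel₀ _ (ne_of_gt ha)]
          _ ≤ u a * (x - a) := mul_le_mul_of_nonneg_left hxa ha.le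
      have h3 : rm * M ≤ rm * ψ x := by
        have := hM x
        nlinarith
      have : deriv ψ x = u x + rm * ψ x := by simp [hu]
      rw [this]
      linarith
    -- so ψ x - x is monotone on [b, ∞)
    have hφ : MonotoneOn (fun x => ψ x - x) (Set.Ici b) := by
      apply monotoneOn_of_deriv_nonneg (convex_Ici b)
      · exact (Continuous.sub (hd1.continuous) continuous_id).continuousOn
      · intro x hx
        exact ((hd1 x).sub (differentiable_id x)).differentiableWithinAt
      · intro x hx
        have hx' : b < x := by simpa using hx
        have : deriv (fun x => ψ x - x) x = deriv ψ x - 1 := by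
          have := ((hd1 x).hasDerivAt).sub (hasDerivAt_id x)
          exact this.deriv
        rw [this]
        linarith [hder1 x hx'.le]
    set X := b + (M - ψ b) + 1 with hX
    have hbX : b ≤ X := by
      have := hM b
      rw [hX]; linarith
    have h6 : ψ b - b ≤ ψ X - X :=
      hφ (Set.self_mem_Ici) (by simpa using hbX) hbX
    have := hM X
    rw [hX] at h6
    linarith
  · -- Case 2 : u ≤ 0 everywhere, then ψ grows as x → -∞
    push_neg at hex
    set w := fun x => Real.exp (-rm * x) * ψ x with hw
    have hdw : ∀ x, HasDerivAt w (Real.exp (-rm * x) * u x) x := by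
      intro x
      have h1 : HasDerivAt (fun x => Real.exp (-rm * x)) (Real.exp (-rm * x) * (-rm)) x := by
        simpa using ((hasDerivAt_id x).const_mul (-rm)).exp
      have : HasDerivAt (fun y => Real.exp (-rm * y) * ψ y) _ x := h1.mul ((hd1 x).hasDerivAt)
      convert this using 1
      simp only [hu]
      ring
    have hanti : Antitone w := by
      apply antitone_of_deriv_nonpos
      · exact fun x => (hdw x).differentiableAt
      · intro x
        rw [(hdw x).deriv]
        exact mul_nonpos_of_nonneg_of_nonpos (Real.exp_pos _).le (hex x)
    set X := (M / ψ 0 + 1) / rm with hX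
    have hX0 : X ≤ 0 := by
      rw [hX]
      apply div_nonpos_of_nonneg_of_nonpos
      · have := hpos 0
        positivity
      · linarith
    have h1 : w 0 ≤ w X := hanti hX0
    have h2 : ψ 0 ≤ Real.exp (-rm * X) * ψ X := by
      have : w 0 = ψ 0 := by simp [hw]
      rw [← this]; exact h1
    have h3 : Real.exp (rm * X) * ψ 0 ≤ ψ X := by
      have h4 := mul_le_mul_of_nonneg_left h2 (Real.exp_pos (rm * X)).le
      calc Real.exp (rm * X) * ψ 0 ≤ Real.exp (rm * X) * (Real.exp (-rm * X) * ψ X) := h4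
        _ = Real.exp (rm * X + -rm * X) * ψ X := by rw [Real.exp_add]; ring
        _ = ψ X := by simp
    have h5 : rm * X = M / ψ 0 + 1 := by
      rw [hX, mul_div_cancel₀ _ (ne_of_lt hrm0)]
    have h6 : rm * X ≤ Real.exp (rm * X) := by
      have := Real.add_one_le_exp (rm * X)
      linarith
    have h7 : (M / ψ 0 + 1) * ψ 0 ≤ ψ X := by
      rw [← h5]
      calc (rm * X) * ψ 0 ≤ Real.exp (rm * X) * ψ 0 :=
            mul_le_mul_of_nonneg_right h6 (hpos 0).le
        _ ≤ ψ X := h3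
    have h8 : (M / ψ 0 + 1) * ψ 0 = M + ψ 0 := by
      have hψ0 : ψ 0 ≠ 0 := ne_of_gt (hpos 0)
      field_simp
    have := hM X
    rw [h8] at h7
    linarith [hpos 0]
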